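/- Let p : ℝ → ℝ³ be differentiable at t with derivative ṗ, with ‖p(s)‖ = r_p for all s (r_p > 0 constant). Write i_p := p(t)/r_p = (i_px, i_py, i_pz) and assume ρ := √(i_px² + i_py²) > 0. Define i_E := (1/ρ) · (−i_py, i_px, 0) and Lat(t) := arcsin(i_pz). If Lon : ℝ → ℝ is differentiable at t with derivative L and satisfies p_x(s) = r_p ρ(s) cos(Lon s) and p_y(s) = r_p ρ(s) sin(Lon s) near t (where ρ(s) := √(p_x(s)² + p_y(s)²)/r_p), then L = ⟪ṗ, i_E⟫ / (r_p cos(Lat(t))). -/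

import Mathlib

open scoped RealInnerProductSpace

/-- Longitude rate formula (Eq. (48)): the derivative of the IIP longitude is
⟪p', i_E⟫ / (r_p cos(Lat)), where i_E is the local East direction. -/
theorem longitude_rate
    (r_p : ℝ) (hrp : 0 < r_p)
    (p : ℝ → EuclideanSpace ℝ (Fin 3)) (p' : EuclideanSpace ℝ (Fin 3)) (t : ℝ)
    (hp : HasDerivAt p p' t)
    (hnorm : ∀ s, ‖p s‖ = r_p)
    (hρ : 0 < Real.sqrt ((p t 0 / r_p) ^ 2 + (p t 1 / r_p) ^ 2))
    (Lon : ℝ → ℝ) (L : ℝ) (hLon : HasDerivAt Lon L t)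
    (hpolar : ∀ᶠ s in nhds t,
      p s 0 = r_p * (Real.sqrt ((p s 0) ^ 2 + (p s 1) ^ 2) / r_p) * Real.cos (Lon s) ∧
      p s 1 = r_p * (Real.sqrt ((p s 0) ^ 2 + (p s 1) ^ 2) / r_p) * Real.sin (Lon s)) :
    L = ⟪p', ((WithLp.toLp 2 ((1 / Real.sqrt ((p t 0 / r_p) ^ 2 + (p t 1 / r_p) ^ 2)) •
          ![-(p t 1 / r_p), p t 0 / r_p, 0]) : EuclideanSpace ℝ (Fin 3)))⟫
        / (r_p * Real.cos (Real.arcsin (p t 2 / r_p))) := by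
  have hrne : r_p ≠ 0 := ne_of_gt hrp
  set a := p t 0 with ha
  set b := p t 1 with hb
  set c := p t 2 with hc
  set ρ := Real.sqrt ((a / r_p) ^ 2 + (b / r_p) ^ 2) with hρdef
  -- coordinate derivatives
  have hf : HasDerivAt (fun s => p s 0) (p' 0) t := by
    exact
      ((EuclideanSpace.proj (0:Fin 3)).hasFDerivAt).comp_hasDerivAt t hp
  have hg : HasDerivAt (fun s => p s 1) (p' 1) t := by
    exact
      ((EuclideanSpace.proj (1:Fin 3)).hasFDerivAt).comp_hasDerivAt t hp
  have habpos : 0 < a ^ 2 + b ^ 2 := by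
    have h1 := Real.sqrt_pos.mp hρ
    have h2 : 0 < r_p ^ 2 := by positivity
    have h3 : (a / r_p) ^ 2 + (b / r_p) ^ 2 = (a ^ 2 + b ^ 2) / r_p ^ 2 := by ring
    rw [h3] at h1
    have h4 := mul_pos h1 h2
    rwa [div_mul_cancel₀ _ (ne_of_gt h2)] at h4
  have habne : a ^ 2 + b ^ 2 ≠ 0 := ne_of_gt habpos
  -- R function
  set Rt := Real.sqrt (a ^ 2 + b ^ 2) with hRt
  have hRtpos : 0 < Rt := Real.sqrt_pos.mpr habpos
  obtain ⟨R', hR⟩ : ∃ d, HasDerivAt (fun s => Real.sqrt ((p s 0) ^ 2 + (p s 1) ^ 2)) d t :=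
    ⟨_, ((hf.pow 2).add (hg.pow 2)).sqrt habne⟩
  -- relate ρ and Rt
  have hrel : r_p * ρ = Rt := by
    rw [hρdef, hRt]
    rw [show (a / r_p) ^ 2 + (b / r_p) ^ 2 = (a ^ 2 + b ^ 2) / r_p ^ 2 by ring]
    rw [Real.sqrt_div (le_of_lt habpos), Real.sqrt_sq hrp.le]
    field_simp
  have hρpos : 0 < ρ := hρ
  -- polar simplification
  have hpolar' : ∀ᶠ s in nhds t,
      p s 0 = Real.sqrt ((p s 0) ^ 2 + (p s 1) ^ 2) * Real.cos (Lon s) ∧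
      p s 1 = Real.sqrt ((p s 0) ^ 2 + (p s 1) ^ 2) * Real.sin (Lon s) := by
    filter_upwards [hpolar] with s ⟨h1, h2⟩
    have key : ∀ x : ℝ, r_p * (x / r_p) = x := fun x => by field_simp
    rw [key] at h1 h2
    exact ⟨h1, h2⟩
  have hat : a = Rt * Real.cos (Lon t) := by
    have := hpolar'.self_of_nhds
    simpa [← ha, ← hb, ← hRt] using this.1
  have hbt : b = Rt * Real.sin (Lon t) := by
    have := hpolar'.self_of_nhds
    simpa [← ha, ← hb, ← hRt] using this.2
  -- derivative identities via uniqueness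
  have hF : HasDerivAt (fun s => Real.sqrt ((p s 0) ^ 2 + (p s 1) ^ 2) * Real.cos (Lon s))
      (R' * Real.cos (Lon t) + Rt * (-Real.sin (Lon t) * L)) t := hR.mul hLon.cos
  have hG : HasDerivAt (fun s => Real.sqrt ((p s 0) ^ 2 + (p s 1) ^ 2) * Real.sin (Lon s))
      (R' * Real.sin (Lon t) + Rt * (Real.cos (Lon t) * L)) t := hR.mul hLon.sin
  have eq0 : p' 0 = R' * Real.cos (Lon t) + Rt * (-Real.sin (Lon t) * L) := by
    refine hf.unique (hF.congr_of_eventuallyEq ?_)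
    filter_upwards [hpolar'] with s hs using hs.1
  have eq1 : p' 1 = R' * Real.sin (Lon t) + Rt * (Real.cos (Lon t) * L) := by
    refine hg.unique (hG.congr_of_eventuallyEq ?_)
    filter_upwards [hpolar'] with s hs using hs.2
  -- cos(arcsin)
  have hn : a ^ 2 + b ^ 2 + c ^ 2 = r_p ^ 2 := by
    have h := hnorm t
    have h2 : ‖p t‖ ^ 2 = r_p ^ 2 := by rw [h]
    rw [EuclideanSpace.norm_eq] at h2
    rw [Real.sq_sqrt (by positivity)] at h2
    simpa [Fin.sum_univ_three, sq_abs] using h2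
  have hcos : Real.cos (Real.arcsin (c / r_p)) = ρ := by
    rw [Real.cos_arcsin, hρdef]
    congr 1
    field_simp
    nlinarith
  -- inner product
  have hinner : ⟪p', ((WithLp.toLp 2 ((1 / ρ) • ![-(b / r_p), a / r_p, 0]) : EuclideanSpace ℝ (Fin 3)))⟫
      = (1 / ρ) * (p' 0 * (-(b / r_p)) + p' 1 * (a / r_p)) := by
    simp [PiLp.inner_apply, Fin.sum_univ_three, PiLp.smul_apply, Matrix.cons_val_zero,
      Matrix.cons_val_one, Matrix.head_cons]
    ring
  have hs := Real.sin_sq_add_cos_sq (Lon t)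
  have hnum : (1 / ρ) * (p' 0 * (-(b / r_p)) + p' 1 * (a / r_p)) = (r_p * ρ) * L := by
    rw [eq0, eq1, hat, hbt, ← hrel]
    field_simp
    ring_nf
    linear_combination (ρ * r_p * L) * hs
  rw [hcos, hinner, hnum, mul_div_cancel_left₀ _ (by positivity : (r_p * ρ) ≠ 0)]
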